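/- Let R be a GNC ring. Then for every natural number n, the element n·1 of R is either nilpotent or a unit. -/

import Mathlib

/-- An element is nil-clean if it is the sum of an idempotent and a nilpotent. -/
def IsNilClean {R : Type*} [Ring R] (a : R) : Prop :=
  ∃ e q : R, IsIdempotentElem e ∧ IsNilpotent q ∧ a = e + q

/-- A ring is GNC (generalized nil-clean) if every non-unit is nil-clean. -/
def IsGNC (R : Type*) [Ring R] : Prop :=
  ∀ a : R, ¬ IsUnit a → IsNilClean a

/-- If `f` is a central idempotent ≠ 1 in a GNC ring, then `2*f` is "nilpotent":
some power of 2 kills `f`. -/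
lemma gnc_two_pow_mul_central_idem_eq_zero {R : Type*} [Ring R] (h : IsGNC R) {f : R}
    (hf : IsIdempotentElem f) (hc : ∀ r : R, f * r = r * f) (hf1 : f ≠ 1) :
    ∃ K : ℕ, (2 : R) ^ K * f = 0 := by
  have hnu : ¬ IsUnit (-f) := by
    intro hu
    have hu' : IsUnit f := by simpa using hu.neg
    obtain ⟨x, hx⟩ := hu'.exists_right_inv
    refine hf1 ?_
    calc f = f * (f * x) := by rw [hx, mul_one]
      _ = (f * f) * x := by rw [mul_assoc]
      _ = f * x := by rw [hf]
      _ = 1 := hx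
  obtain ⟨g, p, hg, hp, hsum⟩ := h _ hnu
  set G := g * f with hGdef
  set P := p * f with hPdef
  have hPf : P * f = P := by rw [hPdef, mul_assoc, hf]
  have hfP : f * P = P := by rw [hPdef, ← mul_assoc, hc p, mul_assoc, hf]
  have hGP : -f = G + P := by
    have := congrArg (· * f) hsum
    simpa [add_mul, neg_mul, hf.eq] using this
  have hG : IsIdempotentElem G := by
    show G * G = G
    rw [hGdef]
    calc g * f * (g * f) = g * (f * g) * f := by noncomm_ring
      _ = g * (g * f) * f := by rw [hc g]
      _ = (g * g) * (f * f) := by noncomm_ring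
      _ = g * f := by rw [hg, hf]
  have hPnil : IsNilpotent P := by
    refine Commute.isNilpotent_mul_right ?_ hp
    exact (hc p).symm
  have hGG : (-f - P) * (-f - P) = -f - P := by
    have hG2 : G = -f - P := by
      rw [hGP]; exact (add_sub_cancel_right G P).symm
    rw [← hG2]; exact hG
  have hGG' : f * f + f * P + P * f + P * P = -f - P := by
    calc f * f + f * P + P * f + P * P = (-f - P) * (-f - P) := by noncomm_ring
      _ = -f - P := hGG
  rw [hf, hfP, hPf] at hGG'
  have hkey : (2 : R) * f = -(P * (3 + P)) := by
    have h0 : (2 : R) * f + P * (3 + P) = (f + P + P + P * P) - (-f - P) := by noncomm_ring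
    rw [hGG', sub_self] at h0
    exact eq_neg_of_add_eq_zero_left h0
  have h2f : IsNilpotent ((2 : R) * f) := by
    rw [hkey]
    refine IsNilpotent.neg ?_
    exact Commute.isNilpotent_mul_right ((Commute.ofNat_right P 3).add_right (Commute.refl P)) hPnil
  obtain ⟨k, hk⟩ := h2f
  refine ⟨k + 1, ?_⟩
  have hcomm2f : Commute (2 : R) f := ((hc 2)).symm
  calc (2 : R) ^ (k + 1) * f = (2 : R) ^ (k + 1) * f ^ (k + 1) := by
        rw [hf.pow_succ_eq]
    _ = ((2 : R) * f) ^ (k + 1) := (hcomm2f.mul_pow (k + 1)).symm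
    _ = ((2 : R) * f) ^ k * ((2 : R) * f) := pow_succ _ _
    _ = 0 := by rw [hk, zero_mul]

theorem gnc_nat_nilpotent_or_unit {R : Type*} [Ring R] (h : IsGNC R) :
    ∀ n : ℕ, IsNilpotent (n : R) ∨ IsUnit (n : R) := by
  intro n
  by_contra hcon
  push_neg at hcon
  obtain ⟨hnil, hn⟩ := hcon
  set a : R := (n : R) with ha
  have hcomm : ∀ r : R, Commute a r := fun r => Nat.cast_commute n r
  obtain ⟨e, q, he, hq, hsum⟩ := h a hn
  have heq : Commute e q := by
    have hqe : q = a - e := by rw [hsum]; exact (add_sub_cancel_left e q).symm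
    show e * q = q * e
    rw [hqe, mul_sub, sub_mul, he.eq, (hcomm e).eq]
  -- a * e = (1+q) * e, and 1 + q is a unit
  have hu : IsUnit (1 + q) := hq.isUnit_one_add
  obtain ⟨v, hv⟩ := hu
  have hae : a * e = ↑v * e := by
    rw [hv, hsum, add_mul, add_mul, one_mul, he.eq]
  -- a * (1 - e) is nilpotent, hence a^m * (1-e) = 0 for some m ≥ 1
  have hanil : IsNilpotent (a * (1 - e)) := by
    have h1 : a * (1 - e) = q * (1 - e) := by
      rw [hsum, add_mul, mul_sub, he.eq, mul_one, sub_self, zero_add]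
    rw [h1]
    exact Commute.isNilpotent_mul_right ((Commute.one_right q).sub_right heq.symm) hq
  have h1e : IsIdempotentElem (1 - e) := he.one_sub
  obtain ⟨m0, hm0⟩ := hanil
  have ham : a ^ (m0 + 1) * (1 - e) = 0 := by
    have hc1 : Commute a (1 - e) := hcomm (1 - e)
    calc a ^ (m0 + 1) * (1 - e) = a ^ (m0 + 1) * (1 - e) ^ (m0 + 1) := by
          rw [h1e.pow_succ_eq]
      _ = (a * (1 - e)) ^ (m0 + 1) := (hc1.mul_pow _).symm
      _ = (a * (1 - e)) ^ m0 * (a * (1 - e)) := pow_succ _ _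
      _ = 0 := by rw [hm0, zero_mul]
  set m := m0 + 1 with hm
  have hce : a ^ m * e = a ^ m := by
    have := ham
    rw [mul_sub, mul_one, sub_eq_zero] at this
    exact this.symm
  -- e = x^k * e where x = v⁻¹ * a
  have hxe : (↑v⁻¹ : R) * a * e = e := by
    rw [mul_assoc, hae, ← mul_assoc, v.inv_mul, one_mul]
  have hiter : ∀ k : ℕ, ((↑v⁻¹ : R) * a) ^ k * e = e := by
    intro k
    induction k with
    | zero => rw [pow_zero, one_mul]
    | succ k ih => rw [pow_succ, mul_assoc, hxe, ih]
  have hvinv_a : Commute (↑v⁻¹ : R) a := ((hcomm ↑v).units_inv_right).symm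
  -- e = w * c with w = (v⁻¹)^m and c = a^m
  set w : R := (↑v⁻¹ : R) ^ m with hw
  set c : R := a ^ m with hcdef
  have hewc : e = w * c := by
    have := hiter m
    rw [hvinv_a.mul_pow, mul_assoc, hce] at this
    exact this.symm
  have hwc : Commute w c := (hvinv_a.pow_pow m m)
  have hccentral : ∀ r : R, c * r = r * c := fun r => ((hcomm r).pow_left m)
  have hce' : c * e = c := hce
  have hec : e * c = c := by
    rw [← hccentral e]; exact hce'
  -- e is central
  have h1 : ∀ r : R, e * r * e = e * r := by
    intro r
    calc e * r * e = w * (c * r) * e := by rw [hewc, mul_assoc w c r]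
      _ = w * (r * c) * e := by rw [hccentral r]
      _ = w * r * (c * e) := by noncomm_ring
      _ = w * r * c := by rw [hce']
      _ = w * (c * r) := by rw [hccentral r, mul_assoc]
      _ = e * r := by rw [hewc, mul_assoc]
  have hcent : ∀ r : R, e * r = r * e := by
    intro r
    have h2 : r * e = e * r * e := by
      have hewc' : e = c * w := by rw [hewc, hwc.eq]
      calc r * e = r * (c * w) := by rw [← hewc']
        _ = (r * c) * w := by rw [mul_assoc]
        _ = (c * r) * w := by rw [hccentral r]
        _ = (e * c) * r * w := by rw [hec]
        _ = e * (c * r) * w := by rw [mul_assoc e c r]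
        _ = e * (r * c) * w := by rw [hccentral r]
        _ = e * r * (c * w) := by noncomm_ring
        _ = e * r * e := by rw [← hewc']
    rw [h2, h1]
  -- rule out e = 0 and e = 1
  have he0 : e ≠ 0 := by
    intro h0
    apply hnil
    rw [hsum, h0, zero_add]
    exact hq
  have he1 : e ≠ 1 := by
    intro h1'
    apply hn
    rw [hsum, h1']
    exact hq.isUnit_one_add
  -- apply the auxiliary lemma to e and 1 - e
  obtain ⟨K₁, hK₁⟩ := gnc_two_pow_mul_central_idem_eq_zero h he hcent he1
  have h1ecent : ∀ r : R, (1 - e) * r = r * (1 - e) := by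
    intro r
    rw [sub_mul, mul_sub, one_mul, mul_one, hcent r]
  have h1e1 : (1 : R) - e ≠ 1 := by
    intro h0
    apply he0
    have := congrArg (fun x => (1 : R) - x) h0
    simpa using this
  obtain ⟨K₂, hK₂⟩ := gnc_two_pow_mul_central_idem_eq_zero h h1e h1ecent h1e1
  set K := K₁ + K₂ with hK
  have h2K : (2 : R) ^ K = 0 := by
    have hKe : (2 : R) ^ K * e = 0 := by
      rw [hK, add_comm K₁ K₂, pow_add, mul_assoc, hK₁, mul_zero]
    have hK1e : (2 : R) ^ K * (1 - e) = 0 := by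
      rw [hK, pow_add, mul_assoc, hK₂, mul_zero]
    have : (2 : R) ^ K * e + (2 : R) ^ K * (1 - e) = (2 : R) ^ K := by
      rw [← mul_add]
      simp
    rw [hKe, hK1e, zero_add] at this
    exact this.symm
  have h2Knat : ((2 ^ K : ℕ) : R) = 0 := by
    push_cast
    exact h2K
  -- now split on parity of n
  rcases Nat.even_or_odd n with hev | hod
  · -- n even ⟹ n nilpotent, contradiction
    apply hnil
    refine ⟨K, ?_⟩
    obtain ⟨t, ht⟩ : 2 ^ K ∣ n ^ K := pow_dvd_pow_of_dvd hev.two_dvd K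
    rw [ha, ← Nat.cast_pow, ht, Nat.cast_mul, h2Knat, zero_mul]
  · -- n odd ⟹ n is a unit, contradiction
    apply hn
    have hcop : Nat.Coprime n (2 ^ K) := (Nat.coprime_two_right.mpr hod).pow_right K
    have hcopZ : IsCoprime (n : ℤ) ((2 : ℤ) ^ K) := by
      rw [Int.isCoprime_iff_gcd_eq_one,
        show ((2 : ℤ)) ^ K = ((2 ^ K : ℕ) : ℤ) by push_cast; ring,
        Int.gcd_natCast_natCast]
      exact hcop
    obtain ⟨x, y, hxy⟩ := hcopZ
    have hxa : (x : R) * a = 1 := by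
      have := congrArg (fun z : ℤ => (z : R)) hxy
      push_cast at this
      rw [h2K, mul_zero, add_zero] at this
      exact this
    have hax : a * (x : R) = 1 := by
      rw [← (hcomm (x : R)).eq] at hxa
      exact hxa
    exact ⟨⟨a, (x : R), hax, hxa⟩, rfl⟩
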